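/- Define a triangular array S_{n,k} by S_{1,1} = S_{2,1} = S_{2,2} = 1, the convention S_{n,0} = 0, the recurrence S_{n,k} = S_{n,k-1} + 2 S_{n-1,k} - S_{n-1,k-1} for 1 ≤ k ≤ n-2, and S_{n,n} = S_{n,n-1} = S_{n,n-2} for n ≥ 3. Then for all n ≥ 1, the row sum ∑_{k=1}^{n} S_{n,k} equals the n-th large Schröder number R_n, where R_1 = 1 and R_{n+1} = R_n + ∑_{k=1}^{n} R_k R_{n+1-k} for n ≥ 1. -/

import Mathlib

open Finset

namespace Stmt15Aux

lemma sum_Icc1 (f : ℕ → ℤ) (n : ℕ) : ∑ k ∈ Icc 1 n, f k = ∑ i ∈ range n, f (i+1) := by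
  induction n with
  | zero => simp
  | succ n ih => rw [Finset.sum_Icc_succ_top (by omega), ih, Finset.sum_range_succ]

/-- Triangular double-sum reindexing. -/
lemma tri (f : ℕ → ℕ → ℤ) (p : ℕ) :
    ∑ a ∈ range p, ∑ j ∈ range (a+1), f j (a-j)
      = ∑ j ∈ range p, ∑ b ∈ range (p-j), f j b := by
  induction p with
  | zero => simp
  | succ p ih =>
    rw [Finset.sum_range_succ, ih, Finset.sum_range_succ (fun j => ∑ b ∈ range (p+1-j), f j b) p]
    have h1 : ∀ j ∈ range p, (∑ b ∈ range (p+1-j), f j b)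
        = (∑ b ∈ range (p-j), f j b) + f j (p-j) := by
      intro j hj
      have hj' := mem_range.mp hj
      have e : p+1-j = (p-j)+1 := by omega
      rw [e, Finset.sum_range_succ]
    rw [Finset.sum_congr rfl h1, Finset.sum_add_distrib]
    have e2 : p+1-p = 1 := by omega
    rw [e2, Finset.sum_range_one, Finset.sum_range_succ (fun j => f j (p-j)) p]
    have e3 : p - p = 0 := by omega
    rw [e3]
    ring

variable (S : ℕ → ℕ → ℤ) (R : ℕ → ℤ)

/-- Row sums. -/
def Tr (n : ℕ) : ℤ := ∑ k ∈ Finset.Icc 1 n, S n k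

/-- `U m q = ∑_a R(a+1) * S(q-a, q-a-m)`, the convolution of `R(·+1)` with the
`m`-th subdiagonal of `S`. -/
def U (m q : ℕ) : ℤ := ∑ a ∈ Finset.range (q+1), R (a+1) * S (q - a) (q - a - m)

/-- The key per-coefficient identity `h_m = x(1+r)h_{m-1}`. -/
def Fst (m n : ℕ) : Prop := S n (n - m) = S (n-1) (n - m) + U S R (m-1) (n-1)

/-- Reindexed Schröder recurrence. -/
lemma Rrec' (hRrec : ∀ n, 1 ≤ n → R (n + 1) = R n + ∑ k ∈ Finset.Icc 1 n, R k * R (n + 1 - k))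
    (p : ℕ) (hp : 1 ≤ p) : R (p+1) = R p + ∑ a ∈ range p, R (a+1) * R (p - a) := by
  rw [hRrec p hp, sum_Icc1 (fun k => R k * R (p+1-k)) p]
  congr 1
  refine Finset.sum_congr rfl fun a ha => ?_
  have := mem_range.mp ha
  congr 2
  omega

section WithHyps

variable (hS11 : S 1 1 = 1) (hS21 : S 2 1 = 1) (hS22 : S 2 2 = 1)
    (hS0 : ∀ n, S n 0 = 0)
    (hrec : ∀ n k, 1 ≤ k → k ≤ n - 2 →
      S n k = S n (k - 1) + 2 * S (n - 1) k - S (n - 1) (k - 1))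
    (htop : ∀ n, 3 ≤ n → S n n = S n (n - 2) ∧ S n (n - 1) = S n (n - 2))

include hS0 hrec htop hS21 hS22 in
/-- Diagonal lemma: `S (n+1) (n-1) = Tr n` for `n ≥ 2`. -/
lemma diag (q : ℕ) : S (q+3) (q+1) = Tr S (q+2) := by
  have tele := Finset.sum_range_sub (fun k => S (q+3) k) (q+1)
  have hterm : ∀ k ∈ range (q+1), S (q+3) (k+1) - S (q+3) k
      = S (q+2) (k+1) + (S (q+2) (k+1) - S (q+2) k) := by
    intro k hk
    have hk' := mem_range.mp hk
    have h := hrec (q+3) (k+1) (by omega) (by omega)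
    have e1 : k+1-1 = k := by omega
    have e2 : q+3-1 = q+2 := by omega
    rw [e1, e2] at h
    linarith
  rw [Finset.sum_congr rfl hterm, Finset.sum_add_distrib,
    Finset.sum_range_sub (fun k => S (q+2) k) (q+1), hS0, hS0] at tele
  have hT : Tr S (q+2) = (∑ i ∈ range (q+1), S (q+2) (i+1)) + S (q+2) (q+2) := by
    rw [Tr, sum_Icc1, Finset.sum_range_succ]
  have htt : S (q+2) (q+2) = S (q+2) (q+1) := by
    rcases q with _ | q'
    · rw [hS22, hS21]
    · have h := htop (q'+3) (by omega)
      have e1 : q'+3-2 = q'+1 := by omega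
      have e2 : q'+3-1 = q'+2 := by omega
      rw [e1, e2] at h
      rw [h.1, h.2]
  rw [hT, htt]
  linarith

include hS0 hrec htop hS21 hS22 hS11 in
/-- `S n (n-1) = Tr (n-1)` for `n ≥ 2`. -/
lemma ddB (q : ℕ) : S (q+2) (q+1) = Tr S (q+1) := by
  rcases q with _ | q'
  · rw [hS21, Tr, sum_Icc1, Finset.sum_range_one, hS11]
  · have h := htop (q'+3) (by omega)
    have e1 : q'+3-2 = q'+1 := by omega
    have e2 : q'+3-1 = q'+2 := by omega
    rw [e1, e2] at h
    rw [h.2, diag S hS21 hS22 hS0 hrec htop q']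

include hS0 hrec htop hS21 hS22 hS11 in
/-- `S n n = Tr (n-1)` for `n ≥ 2`. -/
lemma ddA (q : ℕ) : S (q+2) (q+2) = Tr S (q+1) := by
  rcases q with _ | q'
  · rw [hS22, Tr, sum_Icc1, Finset.sum_range_one, hS11]
  · have h := htop (q'+3) (by omega)
    have e1 : q'+3-2 = q'+1 := by omega
    rw [e1] at h
    rw [h.1, diag S hS21 hS22 hS0 hrec htop q']

include hS0 in
/-- Padded column sums. -/
lemma colsum (q t : ℕ) (h1 : 1 ≤ q) (h2 : q ≤ t+2) :
    ∑ i ∈ range (t+1), S q (q - (i+1)) = Tr S q - S q q := by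
  obtain ⟨w, rfl⟩ : ∃ w, q = w+1 := ⟨q-1, by omega⟩
  have hsub : range w ⊆ range (t+1) := by
    apply Finset.range_subset_range.mpr; omega
  have hzero : ∀ i ∈ range (t+1), i ∉ range w → S (w+1) (w+1-(i+1)) = 0 := by
    intro i _ hi
    have hi' : ¬ (i < w) := fun h => hi (mem_range.mpr h)
    have e : w + 1 - (i+1) = 0 := by omega
    rw [e, hS0]
  rw [← Finset.sum_subset hsub hzero]
  have hrefl : ∑ i ∈ range w, S (w+1) (w+1-(i+1)) = ∑ i ∈ range w, S (w+1) (i+1) := by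
    rw [← Finset.sum_range_reflect (fun i => S (w+1) (i+1)) w]
    refine Finset.sum_congr rfl fun j hj => ?_
    have := mem_range.mp hj
    congr 1
    omega
  rw [hrefl]
  have hT : Tr S (w+1) = (∑ i ∈ range w, S (w+1) (i+1)) + S (w+1) (w+1) := by
    rw [Tr, sum_Icc1, Finset.sum_range_succ]
  linarith


include hS0 in
lemma Ustep (hR1 : R 1 = 1)
    (hRrec : ∀ n, 1 ≤ n → R (n + 1) = R n + ∑ k ∈ Finset.Icc 1 n, R k * R (n + 1 - k))
    (m p : ℕ) (hm : 1 ≤ m)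
    (hF : ∀ q, q ≤ p → Fst S R (m+1) q) :
    U S R (m+1) p = U S R m p - S p (p - m) := by
  rcases p with _ | w
  · have e1 : ∀ a : ℕ, 0 - a = 0 := fun a => by omega
    simp only [U, Finset.sum_range_one, e1, hS0, mul_zero, sub_zero]
  · -- step 1: expand each term of `U (m+1) (w+1)` using `hF`
    have step2 : U S R (m+1) (w+1)
        = U S R m w + ∑ a ∈ range (w+1), R (a+1) * U S R m (w-a) := by
      rw [U, Finset.sum_range_succ]
      have hz : S (w+1-(w+1)) (w+1-(w+1)-(m+1)) = 0 := by
        have e : w+1-(w+1) = 0 := by omega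
        have e2 : (0:ℕ) - (m+1) = 0 := by omega
        rw [e, e2, hS0]
      rw [hz, mul_zero, add_zero]
      have hcong : ∀ a ∈ range (w+1), R (a+1) * S (w+1-a) (w+1-a-(m+1))
          = R (a+1) * S (w-a) (w-a-m) + R (a+1) * U S R m (w-a) := by
        intro a ha
        have ha' := mem_range.mp ha
        have h := hF (w+1-a) (by omega)
        rw [Fst] at h
        have e1 : w+1-a-1 = w-a := by omega
        have e2 : m+1-1 = m := by omega
        have e3 : w+1-a-(m+1) = w-a-m := by omega
        rw [h, e1, e2, e3]
        ring
      rw [Finset.sum_congr rfl hcong, Finset.sum_add_distrib]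
      rfl
    -- step 3: the right-hand side, peeling the `a = 0` term
    have step3 : U S R m (w+1) - S (w+1) (w+1-m)
        = ∑ a ∈ range (w+1), R (a+2) * S (w-a) (w-a-m) := by
      rw [U, Finset.sum_range_succ']
      have hcong : ∀ a ∈ range (w+1), R (a+1+1) * S (w+1-(a+1)) (w+1-(a+1)-m)
          = R (a+2) * S (w-a) (w-a-m) := by
        intro a ha
        have e1 : a+1+1 = a+2 := by omega
        have e2 : w+1-(a+1) = w-a := by omega
        rw [e1, e2]
      rw [Finset.sum_congr rfl hcong]
      have e0 : w+1-0 = w+1 := by omega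
      rw [e0, hR1, one_mul]
      ring
    -- step 4: expand `R (a+2)` by the Schröder recurrence
    have step4 : ∑ a ∈ range (w+1), R (a+2) * S (w-a) (w-a-m)
        = U S R m w
          + ∑ a ∈ range (w+1),
              (∑ j ∈ range (a+1), R (j+1) * R (a+1-j)) * S (w-a) (w-a-m) := by
      have hcong : ∀ a ∈ range (w+1), R (a+2) * S (w-a) (w-a-m)
          = R (a+1) * S (w-a) (w-a-m)
            + (∑ j ∈ range (a+1), R (j+1) * R (a+1-j)) * S (w-a) (w-a-m) := by
        intro a _
        have h := Rrec' R hRrec (a+1) (by omega)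
        have e1 : a+1+1 = a+2 := by omega
        rw [e1] at h
        rw [h]
        ring
      rw [Finset.sum_congr rfl hcong, Finset.sum_add_distrib]
      rfl
    -- step 5: triangular reindexing
    have step5 : ∑ a ∈ range (w+1),
          (∑ j ∈ range (a+1), R (j+1) * R (a+1-j)) * S (w-a) (w-a-m)
        = ∑ a ∈ range (w+1), R (a+1) * U S R m (w-a) := by
      have htri := tri (fun j b => R (j+1) * (R (b+1) * S (w-j-b) (w-j-b-m))) (w+1)
      have hL : ∑ a ∈ range (w+1),
            (∑ j ∈ range (a+1), R (j+1) * R (a+1-j)) * S (w-a) (w-a-m)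
          = ∑ a ∈ range (w+1), ∑ j ∈ range (a+1),
              R (j+1) * (R ((a-j)+1) * S (w-j-(a-j)) (w-j-(a-j)-m)) := by
        refine Finset.sum_congr rfl fun a ha => ?_
        rw [Finset.sum_mul]
        refine Finset.sum_congr rfl fun j hj => ?_
        have hj' := mem_range.mp hj
        have e1 : a+1-j = (a-j)+1 := by omega
        have e2 : w-j-(a-j) = w-a := by omega
        rw [e1, e2]
        ring
      have hR' : ∑ j ∈ range (w+1), ∑ b ∈ range (w+1-j),
            R (j+1) * (R (b+1) * S (w-j-b) (w-j-b-m))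
          = ∑ j ∈ range (w+1), R (j+1) * U S R m (w-j) := by
        refine Finset.sum_congr rfl fun j hj => ?_
        have hj' := mem_range.mp hj
        have e1 : w+1-j = (w-j)+1 := by omega
        rw [e1, U, Finset.mul_sum]
      rw [hL, htri, hR']
    linarith [step2, step3, step4, step5]


include hS11 hS21 hS22 hS0 hrec htop in
lemma key (hR1 : R 1 = 1)
    (hRrec : ∀ n, 1 ≤ n → R (n + 1) = R n + ∑ k ∈ Finset.Icc 1 n, R k * R (n + 1 - k)) :
    ∀ n : ℕ, (∀ m, 2 ≤ m → Fst S R m n) ∧ (1 ≤ n → Tr S n = R n) := by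
  intro n
  induction n using Nat.strong_induction_on with
  | _ n IH =>
  have hFn : ∀ m, 2 ≤ m → Fst S R m n := by
    intro m hm
    induction m, hm using Nat.le_induction with
    | base =>
      -- `Fst 2 n`
      rcases lt_or_ge n 3 with h3 | h3
      · interval_cases n <;> simp [Fst, U, hS0, Finset.sum_range_succ]
      · obtain ⟨t, rfl⟩ : ∃ t, n = t+3 := ⟨n-3, by omega⟩
        rw [Fst]
        have e1 : t+3-2 = t+1 := by omega
        have e2 : t+3-1 = t+2 := by omega
        have e3 : (2:ℕ)-1 = 1 := rfl
        rw [e1, e2, e3]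
        rw [diag S hS21 hS22 hS0 hrec htop t, ddB S hS11 hS21 hS22 hS0 hrec htop t]
        have hU : U S R 1 (t+2) = ∑ a ∈ range (t+1), R (a+1) * Tr S (t+1-a) := by
          rw [U]
          have p1 := Finset.sum_range_succ
            (fun a => R (a+1) * S (t+2-a) (t+2-a-1)) (t+2)
          simp only [show t+2+1 = t+3 from rfl] at p1
          have p2 := Finset.sum_range_succ
            (fun a => R (a+1) * S (t+2-a) (t+2-a-1)) (t+1)
          simp only [show t+1+1 = t+2 from rfl] at p2
          rw [p1, p2]
          have z1 : S (t+2-(t+2)) (t+2-(t+2)-1) = 0 := by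
            have e : t+2-(t+2) = 0 := by omega
            rw [e, show (0:ℕ)-1 = 0 from rfl, hS0]
          have z2 : S (t+2-(t+1)) (t+2-(t+1)-1) = 0 := by
            have e : t+2-(t+1) = 1 := by omega
            rw [e, show (1:ℕ)-1 = 0 from rfl, hS0]
          rw [z1, z2, mul_zero, mul_zero, add_zero, add_zero]
          refine Finset.sum_congr rfl fun a ha => ?_
          have ha' := mem_range.mp ha
          have e5 : t+2-a-1 = (t-a)+1 := by omega
          have e4 : t+2-a = (t-a)+2 := by omega
          rw [e5, e4, ddB S hS11 hS21 hS22 hS0 hrec htop (t-a)]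
          rw [show (t-a)+1 = t+1-a from by omega]
        rw [hU]
        have hTR : ∀ j, 1 ≤ j → j ≤ t+2 → Tr S j = R j :=
          fun j h1 h2 => (IH j (by omega)).2 h1
        rw [hTR (t+2) (by omega) (by omega), hTR (t+1) (by omega) (by omega)]
        have hcong : ∀ a ∈ range (t+1),
            R (a+1) * Tr S (t+1-a) = R (a+1) * R (t+1-a) := by
          intro a ha
          have := mem_range.mp ha
          rw [hTR (t+1-a) (by omega) (by omega)]
        rw [Finset.sum_congr rfl hcong]
        have h := Rrec' R hRrec (t+1) (by omega)
        simp only [show t+1+1 = t+2 from rfl] at h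
        linarith
    | succ m hm IHm =>
      by_cases hn : n ≤ m+1
      · rw [Fst]
        have e1 : n - (m+1) = 0 := by omega
        have e2 : m+1-1 = m := by omega
        rw [e1, e2, hS0, hS0]
        have hz : U S R m (n-1) = 0 := by
          rw [U]
          apply Finset.sum_eq_zero
          intro a ha
          have e3 : n-1-a-m = 0 := by omega
          rw [e3, hS0, mul_zero]
        rw [hz]
        ring
      · push_neg at hn
        have hrec' := hrec n (n-m) (by omega) (by omega)
        have hU := Ustep S R hS0 hR1 hRrec (m-1) (n-1) (by omega)
          (fun q hq => by
            have e : m-1+1 = m := by omega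
            rw [e]
            exact (IH q (by omega)).1 m hm)
        have e : m-1+1 = m := by omega
        have e2 : n-1-(m-1) = n-m := by omega
        rw [e, e2] at hU
        rw [Fst] at IHm ⊢
        have e3 : m+1-1 = m := by omega
        have e4 : n-m-1 = n-(m+1) := by omega
        rw [e3]
        rw [e4] at hrec'
        linarith
  refine ⟨hFn, fun hn => ?_⟩
  rcases lt_or_ge n 3 with h3 | h3
  · interval_cases n
    · rw [Tr, sum_Icc1, Finset.sum_range_one, hS11, hR1]
    · have hL : Tr S 2 = 2 := by
        rw [Tr, sum_Icc1, Finset.sum_range_succ, Finset.sum_range_one]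
        norm_num [hS21, hS22]
      have hR2 : R 2 = 2 := by
        have h2 := hRrec 1 (by omega)
        norm_num [Finset.Icc_self, Finset.sum_singleton, hR1] at h2
        exact h2
      rw [hL, hR2]
  · obtain ⟨t, rfl⟩ : ∃ t, n = t+3 := ⟨n-3, by omega⟩
    have hTR : ∀ j, 1 ≤ j → j ≤ t+2 → Tr S j = R j :=
      fun j h1 h2 => (IH j (by omega)).2 h1
    have key1 : ∀ k ∈ Icc 1 (t+1), S (t+3) k = S (t+2) k + U S R (t+2-k) (t+2) := by
      intro k hk
      obtain ⟨hk1, hk2⟩ := mem_Icc.mp hk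
      have h := hFn (t+3-k) (by omega)
      rw [Fst] at h
      have e1 : t+3-(t+3-k) = k := by omega
      have e2 : t+3-1 = t+2 := by omega
      have e3 : t+3-k-1 = t+2-k := by omega
      rw [e1, e2, e3] at h
      exact h
    have hsum1 : ∑ k ∈ Icc 1 (t+1), S (t+3) k
        = (∑ k ∈ Icc 1 (t+1), S (t+2) k) + ∑ k ∈ Icc 1 (t+1), U S R (t+2-k) (t+2) := by
      rw [Finset.sum_congr rfl key1, Finset.sum_add_distrib]
    have hsum2 : ∑ k ∈ Icc 1 (t+1), S (t+2) k = Tr S (t+2) - Tr S (t+1) := by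
      have h := Finset.sum_Icc_succ_top (a := 1) (b := t+1) (f := fun k => S (t+2) k)
        (by omega)
      simp only [show t+1+1 = t+2 from rfl] at h
      have hA := ddA S hS11 hS21 hS22 hS0 hrec htop t
      have hTdef : Tr S (t+2) = ∑ k ∈ Icc 1 (t+2), S (t+2) k := rfl
      have hTdef2 : Tr S (t+1) = ∑ k ∈ Icc 1 (t+1), S (t+1) k := rfl
      rw [hA] at h
      linarith [h, hTdef]
    have hsum3 : ∑ k ∈ Icc 1 (t+1), U S R (t+2-k) (t+2)
        = ∑ i ∈ range (t+1), U S R (i+1) (t+2) := by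
      rw [sum_Icc1 (fun k => U S R (t+2-k) (t+2)) (t+1)]
      rw [← Finset.sum_range_reflect (fun i => U S R (i+1) (t+2)) (t+1)]
      refine Finset.sum_congr rfl fun j hj => ?_
      have := mem_range.mp hj
      congr 1
      omega
    have hsum4 : ∑ i ∈ range (t+1), U S R (i+1) (t+2)
        = ∑ a ∈ range (t+1), R (a+1) * (Tr S (t+2-a) - Tr S (t+1-a)) := by
      have hswap : ∑ i ∈ range (t+1), U S R (i+1) (t+2)
          = ∑ a ∈ range (t+2+1), ∑ i ∈ range (t+1),
              R (a+1) * S (t+2-a) (t+2-a-(i+1)) := by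
        simp only [U]
        rw [Finset.sum_comm]
      rw [hswap]
      simp only [show t+2+1 = t+3 from rfl]
      have p1 := Finset.sum_range_succ
        (fun a => ∑ i ∈ range (t+1), R (a+1) * S (t+2-a) (t+2-a-(i+1))) (t+2)
      simp only [show t+2+1 = t+3 from rfl] at p1
      have p2 := Finset.sum_range_succ
        (fun a => ∑ i ∈ range (t+1), R (a+1) * S (t+2-a) (t+2-a-(i+1))) (t+1)
      simp only [show t+1+1 = t+2 from rfl] at p2
      rw [p1, p2]
      have z1 : ∑ i ∈ range (t+1), R (t+2+1) * S (t+2-(t+2)) (t+2-(t+2)-(i+1)) = 0 := by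
        apply Finset.sum_eq_zero
        intro i _
        have e : t+2-(t+2) = 0 := by omega
        rw [e]
        have e2 : (0:ℕ)-(i+1) = 0 := by omega
        rw [e2, hS0, mul_zero]
      have z2 : ∑ i ∈ range (t+1), R (t+1+1) * S (t+2-(t+1)) (t+2-(t+1)-(i+1)) = 0 := by
        apply Finset.sum_eq_zero
        intro i _
        have e : t+2-(t+1) = 1 := by omega
        rw [e]
        have e2 : (1:ℕ)-(i+1) = 0 := by omega
        rw [e2, hS0, mul_zero]
      rw [z1, z2, add_zero, add_zero]
      refine Finset.sum_congr rfl fun a ha => ?_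
      have ha' := mem_range.mp ha
      rw [← Finset.mul_sum]
      congr 1
      have hc := colsum S hS0 (t+2-a) t (by omega) (by omega)
      rw [hc]
      have e4 : t+2-a = (t-a)+2 := by omega
      rw [e4, ddA S hS11 hS21 hS22 hS0 hrec htop (t-a)]
      rw [show (t-a)+1 = t+1-a from by omega]
    have hA := ddA S hS11 hS21 hS22 hS0 hrec htop (t+1)
    simp only [show t+1+2 = t+3 from rfl, show t+1+1 = t+2 from rfl] at hA
    have hB := ddB S hS11 hS21 hS22 hS0 hrec htop (t+1)
    simp only [show t+1+2 = t+3 from rfl, show t+1+1 = t+2 from rfl] at hB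
    have hfin : Tr S (t+3) = 3 * Tr S (t+2) - Tr S (t+1)
        + ∑ a ∈ range (t+1), R (a+1) * (Tr S (t+2-a) - Tr S (t+1-a)) := by
      have hsplit := Finset.sum_Icc_succ_top (a := 1) (b := t+2)
        (f := fun k => S (t+3) k) (by omega)
      simp only [show t+2+1 = t+3 from rfl] at hsplit
      have hsplit2 := Finset.sum_Icc_succ_top (a := 1) (b := t+1)
        (f := fun k => S (t+3) k) (by omega)
      simp only [show t+1+1 = t+2 from rfl] at hsplit2
      have hTdef : Tr S (t+3) = ∑ k ∈ Icc 1 (t+3), S (t+3) k := rfl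
      rw [hTdef, hsplit, hsplit2, hsum1, hsum2, hsum3, hsum4, hA, hB]
      ring
    rw [hfin, hTR (t+2) (by omega) (by omega), hTR (t+1) (by omega) (by omega)]
    have hcong : ∀ a ∈ range (t+1),
        R (a+1) * (Tr S (t+2-a) - Tr S (t+1-a)) = R (a+1) * (R (t+2-a) - R (t+1-a)) := by
      intro a ha
      have := mem_range.mp ha
      rw [hTR (t+2-a) (by omega) (by omega), hTR (t+1-a) (by omega) (by omega)]
    rw [Finset.sum_congr rfl hcong]
    have h1 := Rrec' R hRrec (t+2) (by omega)
    simp only [show t+2+1 = t+3 from rfl] at h1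
    have h2 := Rrec' R hRrec (t+1) (by omega)
    simp only [show t+1+1 = t+2 from rfl] at h2
    have p3 := Finset.sum_range_succ (fun a => R (a+1) * R (t+2-a)) (t+1)
    simp only [show t+1+1 = t+2 from rfl, show t+2-(t+1) = 1 from by omega] at p3
    rw [p3, hR1, mul_one] at h1
    have hexp : ∑ a ∈ range (t+1), R (a+1) * (R (t+2-a) - R (t+1-a))
        = (∑ a ∈ range (t+1), R (a+1) * R (t+2-a))
          - ∑ a ∈ range (t+1), R (a+1) * R (t+1-a) := by
      rw [← Finset.sum_sub_distrib]
      exact Finset.sum_congr rfl fun a _ => by ring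
    rw [hexp]
    linarith

end WithHyps

end Stmt15Aux

/-- The row sums of the triangular array `S_{n,k}` are the large Schröder
numbers. -/
theorem stmt15 (S : ℕ → ℕ → ℤ) (R : ℕ → ℤ)
    (hS11 : S 1 1 = 1) (hS21 : S 2 1 = 1) (hS22 : S 2 2 = 1)
    (hS0 : ∀ n, S n 0 = 0)
    (hrec : ∀ n k, 1 ≤ k → k ≤ n - 2 →
      S n k = S n (k - 1) + 2 * S (n - 1) k - S (n - 1) (k - 1))
    (htop : ∀ n, 3 ≤ n → S n n = S n (n - 2) ∧ S n (n - 1) = S n (n - 2))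
    (hR1 : R 1 = 1)
    (hRrec : ∀ n, 1 ≤ n → R (n + 1) = R n + ∑ k ∈ Finset.Icc 1 n, R k * R (n + 1 - k)) :
    ∀ n, 1 ≤ n → ∑ k ∈ Finset.Icc 1 n, S n k = R n := by
  intro n hn
  exact (Stmt15Aux.key S R hS11 hS21 hS22 hS0 hrec htop hR1 hRrec n).2 hn
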